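/- Let P = 𝔽₂[g₁, g₂, g₃, …][ρ, x₁, v₁] be a polynomial ring over 𝔽₂ (in the paper g₁ is written ζ₁² and gᵢ is written ζᵢ for i ≥ 2), and let d be the unique 𝔽₂-linear derivation of P with d(g₁) = ρv₁, d(g₂) = x₁v₁, and d(gᵢ) = 0 for i ≥ 3, d(ρ) = d(x₁) = d(v₁) = 0. Then d ∘ d = 0, and the homology ker(d)/im(d) is isomorphic as an 𝔽₂-algebra to 𝔽₂[b₁, b₂, g₃, g₄, …][ρ, x₁, x₂, v₁]/(ρv₁, x₁v₁, x₂v₁, x₂² + ρ²b₂ + x₁²b₁), via the map sending b₁ ↦ [g₁²], b₂ ↦ [g₂²], gᵢ ↦ [gᵢ] for i ≥ 3, ρ ↦ [ρ], x₁ ↦ [x₁], x₂ ↦ [x₁g₁ + ρg₂], v₁ ↦ [v₁]. -/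

import Mathlib

/-!
STATEMENT 8: In `P = 𝔽₂[g₁, g₂, …][ρ, x₁, v₁]` with the derivation `d` determined by
`d(g₁) = ρv₁`, `d(g₂) = x₁v₁` and `d = 0` on all other variables, we have `d ∘ d = 0` and
`ker(d)/im(d) ≅ 𝔽₂[b₁, b₂, g₃, g₄, …][ρ, x₁, x₂, v₁]/(ρv₁, x₁v₁, x₂v₁, x₂² + ρ²b₂ + x₁²b₁)`
via `b₁ ↦ [g₁²]`, `b₂ ↦ [g₂²]`, `gᵢ ↦ [gᵢ]`, `x₂ ↦ [x₁g₁ + ρg₂]`, and identity on the rest.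

We model `P` with variable set `ℕ ⊕ Fin 3` (`Sum.inl i = g_{i+1}`; `Sum.inr 0, 1, 2 =
ρ, x₁, v₁`) and the presented source with variable set `ℕ ⊕ Fin 4` (`Sum.inl 0, 1 = b₁, b₂`,
`Sum.inl (i+2) = g_{i+3}`; `Sum.inr 0, 1, 2, 3 = ρ, x₁, x₂, v₁`).  The isomorphism claim is
stated extensionally: the comparison map `ψ` lands in cycles, hits every cycle modulo
boundaries, and has the relations ideal as its kernel modulo boundaries.
-/

open MvPolynomial

noncomputable section

namespace Stmt8

abbrev P := MvPolynomial (ℕ ⊕ Fin 3) (ZMod 2)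
abbrev Q := MvPolynomial (ℕ ⊕ Fin 4) (ZMod 2)

-- variables of `P`
def g (i : ℕ) : P := X (Sum.inl i)     -- `g (i)` is `g_{i+1}`
def ρ : P := X (Sum.inr 0)
def x₁ : P := X (Sum.inr 1)
def v₁ : P := X (Sum.inr 2)

-- variables of the presented source `Q`
def b₁' : Q := X (Sum.inl 0)
def b₂' : Q := X (Sum.inl 1)
def g' (i : ℕ) : Q := X (Sum.inl (i + 2))   -- `g' i` is `g_{i+3}`
def ρ' : Q := X (Sum.inr 0)
def x₁' : Q := X (Sum.inr 1)
def x₂' : Q := X (Sum.inr 2)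
def v₁' : Q := X (Sum.inr 3)

/-- the comparison map `b₁ ↦ g₁², b₂ ↦ g₂², gᵢ ↦ gᵢ, ρ ↦ ρ, x₁ ↦ x₁,
`x₂ ↦ x₁g₁ + ρg₂`, `v₁ ↦ v₁`. -/
def ψ : Q →ₐ[ZMod 2] P :=
  aeval (Sum.elim
    (fun i : ℕ => match i with
      | 0 => g 0 ^ 2
      | 1 => g 1 ^ 2
      | (i + 2) => g (i + 2))
    ![ρ, x₁, x₁ * g 0 + ρ * g 1, v₁])

/-- the relations ideal `(ρv₁, x₁v₁, x₂v₁, x₂² + ρ²b₂ + x₁²b₁)`. -/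
def J : Ideal Q := Ideal.span
  {ρ' * v₁', x₁' * v₁', x₂' * v₁', x₂' ^ 2 + ρ' ^ 2 * b₂' + x₁' ^ 2 * b₁'}

/-! ## Auxiliary infrastructure -/

abbrev M3 := (ℕ ⊕ Fin 3) →₀ ℕ
abbrev M4 := (ℕ ⊕ Fin 4) →₀ ℕ

lemma ext3 {m n : M3} (h0 : m (Sum.inl 0) = n (Sum.inl 0)) (h1 : m (Sum.inl 1) = n (Sum.inl 1))
    (hl : ∀ k, m (Sum.inl (k+2)) = n (Sum.inl (k+2)))
    (r0 : m (Sum.inr 0) = n (Sum.inr 0)) (r1 : m (Sum.inr 1) = n (Sum.inr 1))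
    (r2 : m (Sum.inr 2) = n (Sum.inr 2)) : m = n := by
  ext j
  rcases j with (_ | _ | p) | k
  · exact h0
  · exact h1
  · exact hl p
  · fin_cases k
    · exact r0
    · exact r1
    · exact r2

lemma ext4 {m n : M4} (h0 : m (Sum.inl 0) = n (Sum.inl 0)) (h1 : m (Sum.inl 1) = n (Sum.inl 1))
    (hl : ∀ k, m (Sum.inl (k+2)) = n (Sum.inl (k+2)))
    (r0 : m (Sum.inr 0) = n (Sum.inr 0)) (r1 : m (Sum.inr 1) = n (Sum.inr 1))
    (r2 : m (Sum.inr 2) = n (Sum.inr 2)) (r3 : m (Sum.inr 3) = n (Sum.inr 3)) : m = n := by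
  ext j
  rcases j with (_ | _ | p) | k
  · exact h0
  · exact h1
  · exact hl p
  · fin_cases k
    · exact r0
    · exact r1
    · exact r2
    · exact r3

/-- the "doubling" map on exponents, implementing `ψ` on monomials not involving `x₂'`. -/
def Gf (m : M4) : ℕ ⊕ Fin 3 → ℕ :=
  Sum.elim
    (fun n => match n with
      | 0 => 2 * m (Sum.inl 0)
      | 1 => 2 * m (Sum.inl 1)
      | (k + 2) => m (Sum.inl (k + 2)))
    ![m (Sum.inr 0), m (Sum.inr 1), m (Sum.inr 3)]

def G (m : M4) : M3 :=
  Finsupp.onFinset (m.support.image (Sum.map id ![0, 1, 0, 2])) (Gf m) (by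
    rintro (⟨n⟩ | k) h
    · match n, h with
      | 0, h =>
        exact Finset.mem_image.2 ⟨Sum.inl 0, Finsupp.mem_support_iff.2 (by
          intro hh; exact h (by simp [Gf, hh])), rfl⟩
      | 1, h =>
        exact Finset.mem_image.2 ⟨Sum.inl 1, Finsupp.mem_support_iff.2 (by
          intro hh; exact h (by simp [Gf, hh])), rfl⟩
      | (k+2), h =>
        exact Finset.mem_image.2 ⟨Sum.inl (k+2), Finsupp.mem_support_iff.2 (by
          intro hh; exact h (by simp [Gf, hh])), rfl⟩
    · fin_cases k
      · exact Finset.mem_image.2 ⟨Sum.inr 0, Finsupp.mem_support_iff.2 (by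
          intro hh; exact h (by simp [Gf, hh])), rfl⟩
      · exact Finset.mem_image.2 ⟨Sum.inr 1, Finsupp.mem_support_iff.2 (by
          intro hh; exact h (by simp [Gf, hh])), rfl⟩
      · exact Finset.mem_image.2 ⟨Sum.inr 3, Finsupp.mem_support_iff.2 (by
          intro hh; exact h (by simp [Gf, hh])), rfl⟩)

@[simp] lemma G_a0 (m : M4) : G m (Sum.inl 0) = 2 * m (Sum.inl 0) := rfl
@[simp] lemma G_a1 (m : M4) : G m (Sum.inl 1) = 2 * m (Sum.inl 1) := rfl
@[simp] lemma G_an (m : M4) (k : ℕ) : G m (Sum.inl (k+2)) = m (Sum.inl (k+2)) := rfl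
@[simp] lemma G_r0 (m : M4) : G m (Sum.inr 0) = m (Sum.inr 0) := rfl
@[simp] lemma G_r1 (m : M4) : G m (Sum.inr 1) = m (Sum.inr 1) := rfl
@[simp] lemma G_r2 (m : M4) : G m (Sum.inr 2) = m (Sum.inr 3) := rfl

lemma G_add (m n : M4) : G (m + n) = G m + G n := by
  apply ext3 <;> simp <;> ring

@[simp] lemma G_zero : G 0 = 0 := by apply ext3 <;> simp

def Gh : M4 →+ M3 := ⟨⟨G, G_zero⟩, G_add⟩

/-- the "halving" map on exponents, a partial inverse of `G`. -/
def Hf (m : M3) : ℕ ⊕ Fin 4 → ℕ :=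
  Sum.elim
    (fun n => match n with
      | 0 => m (Sum.inl 0) / 2
      | 1 => m (Sum.inl 1) / 2
      | (k + 2) => m (Sum.inl (k + 2)))
    ![m (Sum.inr 0), m (Sum.inr 1), 0, m (Sum.inr 2)]

def H (m : M3) : M4 :=
  Finsupp.onFinset (m.support.image (Sum.map id ![0, 1, 3])) (Hf m) (by
    rintro (⟨n⟩ | k) h
    · match n, h with
      | 0, h =>
        exact Finset.mem_image.2 ⟨Sum.inl 0, Finsupp.mem_support_iff.2 (by
          intro hh; exact h (by simp [Hf, hh])), rfl⟩
      | 1, h =>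
        exact Finset.mem_image.2 ⟨Sum.inl 1, Finsupp.mem_support_iff.2 (by
          intro hh; exact h (by simp [Hf, hh])), rfl⟩
      | (k+2), h =>
        exact Finset.mem_image.2 ⟨Sum.inl (k+2), Finsupp.mem_support_iff.2 (by
          intro hh; exact h (by simp [Hf, hh])), rfl⟩
    · fin_cases k
      · exact Finset.mem_image.2 ⟨Sum.inr 0, Finsupp.mem_support_iff.2 (by
          intro hh; exact h (by simp [Hf, hh])), rfl⟩
      · exact Finset.mem_image.2 ⟨Sum.inr 1, Finsupp.mem_support_iff.2 (by
          intro hh; exact h (by simp [Hf, hh])), rfl⟩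
      · exact absurd rfl h
      · exact Finset.mem_image.2 ⟨Sum.inr 2, Finsupp.mem_support_iff.2 (by
          intro hh; exact h (by simp [Hf, hh])), rfl⟩)

@[simp] lemma H_a0 (m : M3) : H m (Sum.inl 0) = m (Sum.inl 0) / 2 := rfl
@[simp] lemma H_a1 (m : M3) : H m (Sum.inl 1) = m (Sum.inl 1) / 2 := rfl
@[simp] lemma H_an (m : M3) (k : ℕ) : H m (Sum.inl (k+2)) = m (Sum.inl (k+2)) := rfl
@[simp] lemma H_r0 (m : M3) : H m (Sum.inr 0) = m (Sum.inr 0) := rfl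
@[simp] lemma H_r1 (m : M3) : H m (Sum.inr 1) = m (Sum.inr 1) := rfl
@[simp] lemma H_r2 (m : M3) : H m (Sum.inr 2) = 0 := rfl
@[simp] lemma H_r3 (m : M3) : H m (Sum.inr 3) = m (Sum.inr 2) := rfl

lemma H_G (m : M4) (h : m (Sum.inr 2) = 0) : H (G m) = m := by
  apply ext4 <;> simp <;> omega

lemma G_H (m : M3) (h0 : m (Sum.inl 0) % 2 = 0) (h1 : m (Sum.inl 1) % 2 = 0) :
    G (H m) = m := by
  apply ext3 <;> simp <;> omega

/-! ### `ψ` on variables and monomials -/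

lemma psi_l0 : ψ (X (Sum.inl 0)) = g 0 ^ 2 := by simp [ψ]
lemma psi_l1 : ψ (X (Sum.inl 1)) = g 1 ^ 2 := by simp [ψ]
lemma psi_ln (k : ℕ) : ψ (X (Sum.inl (k+2))) = g (k+2) := by simp [ψ]
lemma psi_r0 : ψ ρ' = ρ := by simp [ψ, ρ']
lemma psi_r1 : ψ x₁' = x₁ := by simp [ψ, x₁']
lemma psi_r2 : ψ x₂' = x₁ * g 0 + ρ * g 1 := aeval_X _ (Sum.inr 2)
lemma psi_r3 : ψ v₁' = v₁ := aeval_X _ (Sum.inr 3)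

lemma gen_pow (j : ℕ ⊕ Fin 4) (hj : j ≠ Sum.inr 2) (k : ℕ) :
    ψ (X j ^ k) = monomial (G (Finsupp.single j k)) 1 := by
  rw [map_pow]
  rcases j with (_ | _ | n) | i
  · have h : ψ (X (Sum.inl 0)) = g 0 ^ 2 := by simp [ψ]
    have hi : Finsupp.single (Sum.inl 0) (2 * k) = G (Finsupp.single (Sum.inl 0) k) := by
      apply ext3 <;> simp [Finsupp.single_apply]
    rw [h, ← pow_mul, g, X_pow_eq_monomial, hi]
  · have h : ψ (X (Sum.inl 1)) = g 1 ^ 2 := by simp [ψ]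
    have hi : Finsupp.single (Sum.inl 1) (2 * k) = G (Finsupp.single (Sum.inl 1) k) := by
      apply ext3 <;> simp [Finsupp.single_apply]
    rw [h, ← pow_mul, g, X_pow_eq_monomial, hi]
  · have h : ψ (X (Sum.inl (n+2))) = g (n+2) := by simp [ψ]
    have hi : Finsupp.single (Sum.inl (n+2) : ℕ ⊕ Fin 3) k
        = G (Finsupp.single (Sum.inl (n+2)) k) := by
      apply ext3 <;> simp [Finsupp.single_apply]
    rw [h, g, X_pow_eq_monomial, hi]
  · fin_cases i
    · show ψ (X (Sum.inr 0)) ^ k = monomial (G (Finsupp.single (Sum.inr 0) k)) 1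
      have hi : Finsupp.single (Sum.inr 0 : ℕ ⊕ Fin 3) k
          = G (Finsupp.single (Sum.inr 0) k) := by
        apply ext3 <;> simp [Finsupp.single_apply]
      have h : ψ (X (Sum.inr 0)) = ρ := by simp [ψ]
      rw [h, ρ, X_pow_eq_monomial, hi]
    · show ψ (X (Sum.inr 1)) ^ k = monomial (G (Finsupp.single (Sum.inr 1) k)) 1
      have hi : Finsupp.single (Sum.inr 1 : ℕ ⊕ Fin 3) k
          = G (Finsupp.single (Sum.inr 1) k) := by
        apply ext3 <;> simp [Finsupp.single_apply]
      have h : ψ (X (Sum.inr 1)) = x₁ := by simp [ψ]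
      rw [h, x₁, X_pow_eq_monomial, hi]
    · exact absurd rfl hj
    · show ψ (X (Sum.inr 3)) ^ k = monomial (G (Finsupp.single (Sum.inr 3) k)) 1
      have hi : Finsupp.single (Sum.inr 2 : ℕ ⊕ Fin 3) k
          = G (Finsupp.single (Sum.inr 3) k) := by
        apply ext3 <;> simp [Finsupp.single_apply]
      have h : ψ (X (Sum.inr 3)) = v₁ := aeval_X _ (Sum.inr 3)
      rw [h, v₁, X_pow_eq_monomial, hi]

lemma psi_monomial (m : M4) (hm : m (Sum.inr 2) = 0) (a : ZMod 2) :
    ψ (monomial m a) = monomial (G m) a := by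
  rw [monomial_eq, map_mul]
  have hC : ψ (C a) = C a := by simp [ψ]
  rw [hC, map_finsuppProd]
  have h1 : (m.prod fun j k => ψ (X j ^ k))
      = m.prod fun j k => monomial (G (Finsupp.single j k)) 1 := by
    apply Finsupp.prod_congr
    intro j hjs
    refine gen_pow j ?_ _
    rintro rfl
    exact (Finsupp.mem_support_iff.1 hjs) hm
  rw [h1]
  have h2 : monomial (m.sum fun j k => G (Finsupp.single j k)) a
      = C a * m.prod fun j k => monomial (G (Finsupp.single j k)) (1 : ZMod 2) :=
    monomial_finsupp_sum_index _ _ _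
  have h3 : (m.sum fun j k => G (Finsupp.single j k)) = G m := by
    have h4 := map_finsuppSum Gh m Finsupp.single
    rw [Finsupp.sum_single] at h4
    exact h4.symm
  rw [h3] at h2
  exact h2.symm

/-! ### the section `τ` and the embedding `κ` -/

def τ : P →ₗ[ZMod 2] Q := AddMonoidAlgebra.mapDomainLinearMap (ZMod 2) (ZMod 2) H

lemma tau_monomial (m : M3) (c : ZMod 2) : τ (monomial m c) = monomial (H m) c := by
  rw [← single_eq_monomial, ← single_eq_monomial]
  exact AddMonoidAlgebra.mapDomainLinearMap_single _ _ _

def uκ : ℕ ⊕ Fin 3 → ℕ ⊕ Fin 4 := Sum.map id ![0, 1, 3]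

def κ : P →ₐ[ZMod 2] Q := rename uκ

lemma kappa_l (n : ℕ) : κ (X (Sum.inl n)) = X (Sum.inl n) := by simp [κ, uκ, rename_X]
lemma kappa_rho : κ ρ = ρ' := by simp [κ, ρ, ρ', uκ, rename_X]
lemma kappa_x1 : κ x₁ = x₁' := by
  simp only [κ, x₁, x₁', uκ, rename_X, Sum.map_inr]
  norm_num
lemma kappa_v1 : κ v₁ = v₁' := by
  simp only [κ, v₁, v₁', uκ, rename_X, Sum.map_inr]
  norm_num
  rfl

/-! ### evenness and freeness predicates -/

/-- `Ev p`: all monomials of `p` have even exponents in `g₁, g₂`. -/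
def Ev (p : P) : Prop := ∀ m ∈ p.support, m (Sum.inl 0) % 2 = 0 ∧ m (Sum.inl 1) % 2 = 0

/-- `Fr q`: `q` does not involve the variable `x₂'`. -/
def Fr (q : Q) : Prop := ∀ m ∈ q.support, m (Sum.inr 2) = 0

lemma Ev_sum {ι : Type*} {s : Finset ι} {f : ι → P} (h : ∀ i ∈ s, Ev (f i)) :
    Ev (∑ i ∈ s, f i) := by
  classical
  intro m hm
  obtain ⟨i, hi, hmi⟩ := Finset.mem_biUnion.1 (support_sum hm)
  exact h i hi m hmi

lemma Fr_sum {ι : Type*} {s : Finset ι} {f : ι → Q} (h : ∀ i ∈ s, Fr (f i)) :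
    Fr (∑ i ∈ s, f i) := by
  classical
  intro m hm
  obtain ⟨i, hi, hmi⟩ := Finset.mem_biUnion.1 (support_sum hm)
  exact h i hi m hmi

lemma Ev_add {u v : P} (hu : Ev u) (hv : Ev v) : Ev (u + v) := by
  intro m hm
  rcases Finset.mem_union.1 (support_add hm) with h | h
  · exact hu m h
  · exact hv m h

lemma Ev_monomial {m : M3} (h0 : m (Sum.inl 0) % 2 = 0) (h1 : m (Sum.inl 1) % 2 = 0)
    (c : ZMod 2) : Ev (monomial m c) := by
  classical
  intro n hn
  rw [support_monomial] at hn
  split at hn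
  · exact absurd hn (Finset.notMem_empty n)
  · rw [Finset.mem_singleton] at hn
    subst hn; exact ⟨h0, h1⟩

lemma Fr_monomial {m : M4} (h : m (Sum.inr 2) = 0) (c : ZMod 2) : Fr (monomial m c) := by
  classical
  intro n hn
  rw [support_monomial] at hn
  split at hn
  · exact absurd hn (Finset.notMem_empty n)
  · rw [Finset.mem_singleton] at hn
    subst hn; exact h

lemma Ev_X_mul {k : Fin 3} {u : P} (hu : Ev u) : Ev (X (Sum.inr k) * u) := by
  intro m hm
  rw [support_X_mul] at hm
  obtain ⟨n, hn, rfl⟩ := Finset.mem_map.1 hm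
  rcases hu n hn with ⟨e0, e1⟩
  constructor <;> simp [addLeftEmbedding_apply, Finsupp.single_apply] <;> omega

lemma Fr_X_mul {k : Fin 4} (hk : k ≠ 2) {u : Q} (hu : Fr u) : Fr (X (Sum.inr k) * u) := by
  intro m hm
  rw [support_X_mul] at hm
  obtain ⟨n, hn, rfl⟩ := Finset.mem_map.1 hm
  have := hu n hn
  simp only [addLeftEmbedding_apply, Finsupp.add_apply, Finsupp.single_apply]
  rw [this]
  simp only [add_zero]
  rw [if_neg (by simpa using hk)]

lemma Ev_psi {q : Q} (hq : Fr q) : Ev (ψ q) := by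
  rw [as_sum q, map_sum]
  apply Ev_sum
  intro m hm
  rw [psi_monomial m (hq m hm)]
  apply Ev_monomial <;> simp <;> omega

lemma Fr_tau (p : P) : Fr (τ p) := by
  rw [as_sum p, map_sum]
  apply Fr_sum
  intro m hm
  rw [tau_monomial]
  exact Fr_monomial (H_r2 m) _

lemma Fr_kappa (p : P) : Fr (κ p) := by
  rw [as_sum p, map_sum]
  apply Fr_sum
  intro m hm
  rw [κ, rename_monomial]
  apply Fr_monomial
  apply Finsupp.mapDomain_notin_range
  rintro ⟨(n | i), hx⟩
  · simp [uκ] at hx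
  · fin_cases i <;> simp [uκ] at hx <;> exact absurd hx (by decide)

lemma tau_psi {q : Q} (hq : Fr q) : τ (ψ q) = q := by
  conv_lhs => rw [as_sum q]
  rw [map_sum, map_sum]
  have h : ∀ m ∈ q.support, τ (ψ (monomial m (coeff m q))) = monomial m (coeff m q) := by
    intro m hm
    rw [psi_monomial m (hq m hm), tau_monomial, H_G m (hq m hm)]
  rw [Finset.sum_congr rfl h]
  exact (as_sum q).symm

lemma psi_tau {p : P} (hp : Ev p) : ψ (τ p) = p := by
  conv_lhs => rw [as_sum p]
  rw [map_sum, map_sum]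
  have h : ∀ m ∈ p.support, ψ (τ (monomial m (coeff m p))) = monomial m (coeff m p) := by
    intro m hm
    rw [tau_monomial, psi_monomial (H m) (H_r2 m), G_H m (hp m hm).1 (hp m hm).2]
  rw [Finset.sum_congr rfl h]
  exact (as_sum p).symm

/-! ### char 2 helpers -/

lemma twoP : (2 : P) = 0 := CharTwo.two_eq_zero
lemma twoQ : (2 : Q) = 0 := CharTwo.two_eq_zero

lemma cast_mod0 {n : ℕ} (h : n % 2 = 0) : ((n : ZMod 2)) = 0 := by
  rw [← ZMod.natCast_mod n 2, h]; simp

lemma cast_mod1 {n : ℕ} (h : n % 2 = 1) : ((n : ZMod 2)) = 1 := by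
  rw [← ZMod.natCast_mod n 2, h]; simp

/-! ### the sector projections `T a b` -/

def sm (a b : ℕ) : M3 := Finsupp.single (Sum.inl 0) a + Finsupp.single (Sum.inl 1) b

@[simp] lemma sm_a0 (a b : ℕ) : sm a b (Sum.inl 0) = a := by
  simp [sm, Finsupp.single_apply]
@[simp] lemma sm_a1 (a b : ℕ) : sm a b (Sum.inl 1) = b := by
  simp [sm, Finsupp.single_apply]
@[simp] lemma sm_an (a b k : ℕ) : sm a b (Sum.inl (k+2)) = 0 := by
  simp [sm, Finsupp.single_apply]
@[simp] lemma sm_r (a b : ℕ) (i : Fin 3) : sm a b (Sum.inr i) = 0 := by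
  simp [sm, Finsupp.single_apply]

def T (a b : ℕ) : P →ₗ[ZMod 2] P :=
  (Finsupp.lsum (ZMod 2) fun m : M3 =>
    (if m (Sum.inl 0) % 2 = a ∧ m (Sum.inl 1) % 2 = b then monomial (m - sm a b) else 0 :
      ZMod 2 →ₗ[ZMod 2] P)) ∘ₗ (AddMonoidAlgebra.coeffLinearEquiv (ZMod 2)).toLinearMap

lemma T_monomial (a b : ℕ) (m : M3) (c : ZMod 2) :
    T a b (monomial m c) =
      if m (Sum.inl 0) % 2 = a ∧ m (Sum.inl 1) % 2 = b then monomial (m - sm a b) c else 0 := by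
  rw [← single_eq_monomial]
  simp only [T, LinearMap.comp_apply, LinearEquiv.coe_coe,
    AddMonoidAlgebra.coeffLinearEquiv_apply, AddMonoidAlgebra.coeff_single, Finsupp.lsum_single]
  split <;> simp

lemma mon_sm00 : monomial (sm 0 0) (1 : ZMod 2) = 1 := by
  have : sm 0 0 = 0 := by apply ext3 <;> simp
  rw [this, monomial_zero', C_1]

lemma mon_sm10 : monomial (sm 1 0) (1 : ZMod 2) = g 0 := by
  have : sm 1 0 = Finsupp.single (Sum.inl 0) 1 := by
    apply ext3 <;> simp [Finsupp.single_apply]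
  rw [this, ← X_pow_eq_monomial, pow_one, g]

lemma mon_sm01 : monomial (sm 0 1) (1 : ZMod 2) = g 1 := by
  have : sm 0 1 = Finsupp.single (Sum.inl 1) 1 := by
    apply ext3 <;> simp [Finsupp.single_apply]
  rw [this, ← X_pow_eq_monomial, pow_one, g]

lemma mon_g0 : g 0 = monomial (Finsupp.single (Sum.inl 0) 1) (1 : ZMod 2) := by
  rw [g, ← pow_one (X (Sum.inl 0)), X_pow_eq_monomial]

lemma mon_g1 : g 1 = monomial (Finsupp.single (Sum.inl 1) 1) (1 : ZMod 2) := by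
  rw [g, ← pow_one (X (Sum.inl 1)), X_pow_eq_monomial]

lemma mon_sm11 : monomial (sm 1 1) (1 : ZMod 2) = g 0 * g 1 := by
  rw [mon_g0, mon_g1, monomial_mul, mul_one]
  rfl

/-- key computation: `T a b` applied to a shifted even element. -/
lemma T_sector {a b a' b' : ℕ} (ha : a ≤ 1) (hb : b ≤ 1) (ha' : a' ≤ 1) (hb' : b' ≤ 1)
    {u : P} (hu : Ev u) :
    T a b (monomial (sm a' b') 1 * u) = if a = a' ∧ b = b' then u else 0 := by
  conv_lhs => rw [as_sum u]
  rw [Finset.mul_sum, map_sum]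
  have key : ∀ m ∈ u.support, T a b (monomial (sm a' b') 1 * monomial m (coeff m u))
      = if a = a' ∧ b = b' then monomial m (coeff m u) else 0 := by
    intro m hm
    obtain ⟨e0, e1⟩ := hu m hm
    rw [monomial_mul, one_mul, T_monomial]
    have hc0 : (sm a' b' + m) (Sum.inl 0) % 2 = a' := by simp; omega
    have hc1 : (sm a' b' + m) (Sum.inl 1) % 2 = b' := by simp; omega
    by_cases h : a = a' ∧ b = b'
    · obtain ⟨rfl, rfl⟩ := h
      have hE : sm a b + m - sm a b = m := by apply ext3 <;> simp <;> omega
      rw [if_pos ⟨hc0, hc1⟩, if_pos ⟨rfl, rfl⟩, hE]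
    · rw [if_neg (by rw [hc0, hc1]; tauto), if_neg h]
  rw [Finset.sum_congr rfl key]
  by_cases h : a = a' ∧ b = b'
  · simp only [if_pos h]
    exact (as_sum u).symm
  · simp [if_neg h]

lemma T_even {a b : ℕ} (ha : a ≤ 1) (hb : b ≤ 1) {u : P} (hu : Ev u) :
    T a b u = if a = 0 ∧ b = 0 then u else 0 := by
  have := T_sector ha hb (Nat.zero_le 1) (Nat.zero_le 1) hu
  rwa [mon_sm00, one_mul] at this

lemma T_g0 {a b : ℕ} (ha : a ≤ 1) (hb : b ≤ 1) {u : P} (hu : Ev u) :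
    T a b (g 0 * u) = if a = 1 ∧ b = 0 then u else 0 := by
  have := T_sector ha hb (le_refl 1) (Nat.zero_le 1) hu
  rwa [mon_sm10] at this

lemma T_g1 {a b : ℕ} (ha : a ≤ 1) (hb : b ≤ 1) {u : P} (hu : Ev u) :
    T a b (g 1 * u) = if a = 0 ∧ b = 1 then u else 0 := by
  have := T_sector ha hb (Nat.zero_le 1) (le_refl 1) hu
  rwa [mon_sm01] at this

lemma T_g01 {a b : ℕ} (ha : a ≤ 1) (hb : b ≤ 1) {u : P} (hu : Ev u) :
    T a b (g 0 * (g 1 * u)) = if a = 1 ∧ b = 1 then u else 0 := by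
  have := T_sector ha hb (le_refl 1) (le_refl 1) hu
  rwa [mon_sm11, mul_assoc] at this

lemma Ev_T (a b : ℕ) (ha : a ≤ 1) (hb : b ≤ 1) (p : P) : Ev (T a b p) := by
  rw [as_sum p, map_sum]
  apply Ev_sum
  intro m hm
  rw [T_monomial]
  split
  · next h =>
    apply Ev_monomial <;> simp [Finsupp.tsub_apply] <;> omega
  · intro n hn; simp at hn

/-- the canonical four-sector decomposition. -/
lemma decomp (p : P) :
    p = T 0 0 p + g 0 * T 1 0 p + g 1 * T 0 1 p + g 0 * (g 1 * T 1 1 p) := by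
  induction p using MvPolynomial.induction_on' with
  | add p q hp hq =>
    simp only [map_add]
    rw [mul_add, mul_add, mul_add (g 1), mul_add (g 0)]
    linear_combination hp + hq
  | monomial m c =>
    rcases Nat.mod_two_eq_zero_or_one (m (Sum.inl 0)) with h0 | h0 <;>
      rcases Nat.mod_two_eq_zero_or_one (m (Sum.inl 1)) with h1 | h1 <;>
        simp only [T_monomial, h0, h1] <;> norm_num
    · -- sector (0,0)
      have : m - sm 0 0 = m := by apply ext3 <;> simp
      rw [this]
    · -- sector (0,1)
      have : g 1 * monomial (m - sm 0 1) c = monomial m c := by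
        rw [← mon_sm01, monomial_mul, one_mul]
        have hE : sm 0 1 + (m - sm 0 1) = m := by apply ext3 <;> simp <;> omega
        rw [hE]
      rw [this]
    · -- sector (1,0)
      have : g 0 * monomial (m - sm 1 0) c = monomial m c := by
        rw [← mon_sm10, monomial_mul, one_mul]
        have hE : sm 1 0 + (m - sm 1 0) = m := by apply ext3 <;> simp <;> omega
        rw [hE]
      rw [this]
    · -- sector (1,1)
      have : g 0 * (g 1 * monomial (m - sm 1 1) c) = monomial m c := by
        rw [← mul_assoc, ← mon_sm11, monomial_mul, one_mul]
        have hE : sm 1 1 + (m - sm 1 1) = m := by apply ext3 <;> simp <;> omega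
        rw [hE]
      rw [this]

/-! ### the partial-derivative formula -/

lemma X_mul_monomial3 (s : ℕ ⊕ Fin 3) (m : M3) (c : ZMod 2) :
    X s * monomial m c = monomial (Finsupp.single s 1 + m) c := by
  rw [← pow_one (X s), X_pow_eq_monomial, monomial_mul, one_mul]

lemma X_mul_monomial4 (s : ℕ ⊕ Fin 4) (m : M4) (c : ZMod 2) :
    X s * monomial m c = monomial (Finsupp.single s 1 + m) c := by
  rw [← pow_one (X s), X_pow_eq_monomial, monomial_mul, one_mul]

lemma Dformula (p : P) :
    ρ * v₁ * (pderiv (Sum.inl 0) p) + x₁ * v₁ * (pderiv (Sum.inl 1) p)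
      = v₁ * (ρ * T 1 0 p + x₁ * T 0 1 p)
        + g 0 * (x₁ * (v₁ * T 1 1 p)) + g 1 * (ρ * (v₁ * T 1 1 p)) := by
  induction p using MvPolynomial.induction_on' with
  | add p q hp hq =>
    simp only [map_add]
    ring_nf
    ring_nf at hp hq
    linear_combination hp + hq
  | monomial m c =>
    rw [pderiv_monomial, pderiv_monomial]
    rcases Nat.mod_two_eq_zero_or_one (m (Sum.inl 0)) with h0 | h0 <;>
      rcases Nat.mod_two_eq_zero_or_one (m (Sum.inl 1)) with h1 | h1
    · -- sector (0,0)
      rw [cast_mod0 h0, cast_mod0 h1]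
      simp [T_monomial, h0, h1]
    · -- sector (0,1)
      rw [cast_mod0 h0, cast_mod1 h1]
      simp only [T_monomial, h0, h1, mul_zero, mul_one, monomial_zero, zero_add, add_zero]
      norm_num
      have hs : Finsupp.single (Sum.inl 1) 1 = sm 0 1 := by
        apply ext3 <;> simp [Finsupp.single_apply]
      rw [hs]
      ring
    · -- sector (1,0)
      rw [cast_mod1 h0, cast_mod0 h1]
      simp only [T_monomial, h0, h1, mul_zero, mul_one, monomial_zero, zero_add, add_zero]
      norm_num
      have hs : Finsupp.single (Sum.inl 0) 1 = sm 1 0 := by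
        apply ext3 <;> simp [Finsupp.single_apply]
      rw [hs]
      ring
    · -- sector (1,1)
      rw [cast_mod1 h0, cast_mod1 h1]
      simp only [T_monomial, h0, h1, mul_one]
      norm_num
      have hs0 : Finsupp.single (Sum.inl 0) 1 = sm 1 0 := by
        apply ext3 <;> simp [Finsupp.single_apply]
      have hs1 : Finsupp.single (Sum.inl 1) 1 = sm 0 1 := by
        apply ext3 <;> simp [Finsupp.single_apply]
      rw [hs0, hs1]
      have eA : g 0 * monomial (m - sm 1 1) c = monomial (m - sm 0 1) c := by
        rw [g, X_mul_monomial3]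
        have : Finsupp.single (Sum.inl 0) 1 + (m - sm 1 1) = m - sm 0 1 := by
          apply ext3 <;> simp [Finsupp.single_apply] <;> omega
        rw [this]
      have eB : g 1 * monomial (m - sm 1 1) c = monomial (m - sm 1 0) c := by
        rw [g, X_mul_monomial3]
        have : Finsupp.single (Sum.inl 1) 1 + (m - sm 1 1) = m - sm 1 0 := by
          apply ext3 <;> simp [Finsupp.single_apply] <;> omega
        rw [this]
      linear_combination (-(x₁ * v₁)) * eA - (ρ * v₁) * eB

/-! ### specialised sector lemmas -/

lemma T00_even {u : P} (hu : Ev u) : T 0 0 u = u := by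
  rw [T_even (by norm_num) (by norm_num) hu]; norm_num
lemma T10_even {u : P} (hu : Ev u) : T 1 0 u = 0 := by
  rw [T_even (by norm_num) (by norm_num) hu]; norm_num
lemma T01_even {u : P} (hu : Ev u) : T 0 1 u = 0 := by
  rw [T_even (by norm_num) (by norm_num) hu]; norm_num
lemma T11_even {u : P} (hu : Ev u) : T 1 1 u = 0 := by
  rw [T_even (by norm_num) (by norm_num) hu]; norm_num
lemma T00_g0 {u : P} (hu : Ev u) : T 0 0 (g 0 * u) = 0 := by
  rw [T_g0 (by norm_num) (by norm_num) hu]; norm_num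
lemma T10_g0 {u : P} (hu : Ev u) : T 1 0 (g 0 * u) = u := by
  rw [T_g0 (by norm_num) (by norm_num) hu]; norm_num
lemma T01_g0 {u : P} (hu : Ev u) : T 0 1 (g 0 * u) = 0 := by
  rw [T_g0 (by norm_num) (by norm_num) hu]; norm_num
lemma T11_g0 {u : P} (hu : Ev u) : T 1 1 (g 0 * u) = 0 := by
  rw [T_g0 (by norm_num) (by norm_num) hu]; norm_num
lemma T00_g1 {u : P} (hu : Ev u) : T 0 0 (g 1 * u) = 0 := by
  rw [T_g1 (by norm_num) (by norm_num) hu]; norm_num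
lemma T10_g1 {u : P} (hu : Ev u) : T 1 0 (g 1 * u) = 0 := by
  rw [T_g1 (by norm_num) (by norm_num) hu]; norm_num
lemma T01_g1 {u : P} (hu : Ev u) : T 0 1 (g 1 * u) = u := by
  rw [T_g1 (by norm_num) (by norm_num) hu]; norm_num
lemma T11_g1 {u : P} (hu : Ev u) : T 1 1 (g 1 * u) = 0 := by
  rw [T_g1 (by norm_num) (by norm_num) hu]; norm_num
lemma T00_g01 {u : P} (hu : Ev u) : T 0 0 (g 0 * (g 1 * u)) = 0 := by
  rw [T_g01 (by norm_num) (by norm_num) hu]; norm_num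
lemma T10_g01 {u : P} (hu : Ev u) : T 1 0 (g 0 * (g 1 * u)) = 0 := by
  rw [T_g01 (by norm_num) (by norm_num) hu]; norm_num
lemma T01_g01 {u : P} (hu : Ev u) : T 0 1 (g 0 * (g 1 * u)) = 0 := by
  rw [T_g01 (by norm_num) (by norm_num) hu]; norm_num
lemma T11_g01 {u : P} (hu : Ev u) : T 1 1 (g 0 * (g 1 * u)) = u := by
  rw [T_g01 (by norm_num) (by norm_num) hu]; norm_num

/-- two sector decompositions with even components agree componentwise. -/
lemma sector_eq {A B C E A' B' C' E' : P} (hA : Ev A) (hB : Ev B) (hC : Ev C) (hE : Ev E)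
    (hA' : Ev A') (hB' : Ev B') (hC' : Ev C') (hE' : Ev E')
    (h : A + g 0 * B + g 1 * C + g 0 * (g 1 * E)
        = A' + g 0 * B' + g 1 * C' + g 0 * (g 1 * E')) :
    A = A' ∧ B = B' ∧ C = C' ∧ E = E' := by
  refine ⟨?_, ?_, ?_, ?_⟩
  · have e := congrArg (T 0 0) h
    simpa only [map_add, T00_even hA, T00_even hA', T00_g0 hB, T00_g0 hB', T00_g1 hC,
      T00_g1 hC', T00_g01 hE, T00_g01 hE', add_zero] using e
  · have e := congrArg (T 1 0) h
    simpa only [map_add, T10_even hA, T10_even hA', T10_g0 hB, T10_g0 hB', T10_g1 hC,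
      T10_g1 hC', T10_g01 hE, T10_g01 hE', add_zero, zero_add] using e
  · have e := congrArg (T 0 1) h
    simpa only [map_add, T01_even hA, T01_even hA', T01_g0 hB, T01_g0 hB', T01_g1 hC,
      T01_g1 hC', T01_g01 hE, T01_g01 hE', add_zero, zero_add] using e
  · have e := congrArg (T 1 1) h
    simpa only [map_add, T11_even hA, T11_even hA', T11_g0 hB, T11_g0 hB', T11_g1 hC,
      T11_g1 hC', T11_g01 hE, T11_g01 hE', add_zero, zero_add] using e

/-! ### `τ` is semilinear for multiplication by the variables `ρ, x₁, v₁` -/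

lemma H_add_r0 (m : M3) :
    H (Finsupp.single (Sum.inr 0) 1 + m) = Finsupp.single (Sum.inr 0) 1 + H m := by
  apply ext4 <;> simp [Finsupp.single_apply]

lemma H_add_r1 (m : M3) :
    H (Finsupp.single (Sum.inr 1) 1 + m) = Finsupp.single (Sum.inr 1) 1 + H m := by
  apply ext4 <;> simp [Finsupp.single_apply]

lemma H_add_r2 (m : M3) :
    H (Finsupp.single (Sum.inr 2) 1 + m) = Finsupp.single (Sum.inr 3) 1 + H m := by
  apply ext4 <;> simp [Finsupp.single_apply]

lemma tau_rho_mul (u : P) : τ (ρ * u) = ρ' * τ u := by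
  conv_lhs => rw [as_sum u]
  conv_rhs => rw [as_sum u]
  rw [Finset.mul_sum, map_sum, map_sum, Finset.mul_sum]
  apply Finset.sum_congr rfl
  intro m _
  rw [ρ, X_mul_monomial3, tau_monomial, tau_monomial, H_add_r0, ρ', X_mul_monomial4]

lemma tau_x1_mul (u : P) : τ (x₁ * u) = x₁' * τ u := by
  conv_lhs => rw [as_sum u]
  conv_rhs => rw [as_sum u]
  rw [Finset.mul_sum, map_sum, map_sum, Finset.mul_sum]
  apply Finset.sum_congr rfl
  intro m _
  rw [x₁, X_mul_monomial3, tau_monomial, tau_monomial, H_add_r1, x₁', X_mul_monomial4]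

lemma tau_v1_mul (u : P) : τ (v₁ * u) = v₁' * τ u := by
  conv_lhs => rw [as_sum u]
  conv_rhs => rw [as_sum u]
  rw [Finset.mul_sum, map_sum, map_sum, Finset.mul_sum]
  apply Finset.sum_congr rfl
  intro m _
  rw [v₁, X_mul_monomial3, tau_monomial, tau_monomial, H_add_r2, v₁', X_mul_monomial4]

/-! ### reduction modulo the relation ideal -/

lemma gen4_mem : x₂' ^ 2 + ρ' ^ 2 * b₂' + x₁' ^ 2 * b₁' ∈ J :=
  Ideal.subset_span (by simp)

lemma gen1_mem : ρ' * v₁' ∈ J := Ideal.subset_span (by simp)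
lemma gen2_mem : x₁' * v₁' ∈ J := Ideal.subset_span (by simp)
lemma gen3_mem : x₂' * v₁' ∈ J := Ideal.subset_span (by simp)

/-- every element of `Q` reduces, modulo `J`, to `κ p₀ + κ p₁ * x₂'`. -/
lemma dec (w : Q) : ∃ p₀ p₁ : P, w - (κ p₀ + κ p₁ * x₂') ∈ J := by
  induction w using MvPolynomial.induction_on with
  | C a =>
    refine ⟨C a, 0, ?_⟩
    have : κ (C a) = C a := by simp [κ]
    rw [this]
    simp
  | add p q hp hq =>
    obtain ⟨p₀, p₁, hp⟩ := hp
    obtain ⟨q₀, q₁, hq⟩ := hq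
    refine ⟨p₀ + q₀, p₁ + q₁, ?_⟩
    have : p + q - (κ (p₀ + q₀) + κ (p₁ + q₁) * x₂')
        = (p - (κ p₀ + κ p₁ * x₂')) + (q - (κ q₀ + κ q₁ * x₂')) := by
      rw [map_add, map_add]; ring
    rw [this]
    exact J.add_mem hp hq
  | mul_X p i hp =>
    obtain ⟨p₀, p₁, hp⟩ := hp
    have base : ∀ i' : ℕ ⊕ Fin 3, ∃ p₀ p₁ : P,
        p * X (uκ i') - (κ p₀ + κ p₁ * x₂') ∈ J := by
      intro i'
      refine ⟨p₀ * X i', p₁ * X i', ?_⟩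
      have : p * X (uκ i') - (κ (p₀ * X i') + κ (p₁ * X i') * x₂')
          = (p - (κ p₀ + κ p₁ * x₂')) * X (uκ i') := by
        rw [map_mul, map_mul, show κ (X i') = X (uκ i') from rename_X uκ i']; ring
      rw [this]
      exact Ideal.mul_mem_right _ _ hp
    rcases i with n | k
    · exact base (Sum.inl n)
    · fin_cases k
      · exact base (Sum.inr 0)
      · exact base (Sum.inr 1)
      · -- the `x₂'` case
        refine ⟨p₁ * (ρ ^ 2 * g 1 + x₁ ^ 2 * g 0), p₀, ?_⟩
        show p * x₂' - (κ (p₁ * (ρ ^ 2 * g 1 + x₁ ^ 2 * g 0)) + κ p₀ * x₂') ∈ J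
        have kappa_g : ∀ n, κ (g n) = X (Sum.inl n) := fun n => kappa_l n
        have hκ : κ (p₁ * (ρ ^ 2 * g 1 + x₁ ^ 2 * g 0))
            = κ p₁ * (ρ' ^ 2 * b₂' + x₁' ^ 2 * b₁') := by
          rw [map_mul, map_add, map_mul, map_mul, map_pow, map_pow, kappa_rho, kappa_x1,
            kappa_g 1, kappa_g 0]
          rfl
        rw [hκ]
        have key : p * x₂' - (κ p₁ * (ρ' ^ 2 * b₂' + x₁' ^ 2 * b₁') + κ p₀ * x₂')
            = (p - (κ p₀ + κ p₁ * x₂')) * x₂'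
              + κ p₁ * (x₂' ^ 2 + ρ' ^ 2 * b₂' + x₁' ^ 2 * b₁')
              - (κ p₁ * (ρ' ^ 2 * b₂' + x₁' ^ 2 * b₁')) * 2 := by
          ring
        rw [key, twoQ, mul_zero, sub_zero]
        exact J.add_mem (Ideal.mul_mem_right _ _ hp) (Ideal.mul_mem_left _ _ gen4_mem)
      · exact base (Sum.inr 2)

/-! ## main theorem -/

set_option maxHeartbeats 2000000 in
theorem stmt_8
    (d : Derivation (ZMod 2) P P)
    (hg1 : d (g 0) = ρ * v₁)
    (hg2 : d (g 1) = x₁ * v₁)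
    (hg : ∀ i : ℕ, d (g (i + 2)) = 0)
    (hρ : d ρ = 0) (hx₁ : d x₁ = 0) (hv₁ : d v₁ = 0) :
    (∀ p : P, d (d p) = 0) ∧
    (∀ q : Q, d (ψ q) = 0) ∧
    (∀ p : P, d p = 0 → ∃ (q : Q) (r : P), p = ψ q + d r) ∧
    (∀ q : Q, (∃ r : P, ψ q = d r) ↔ q ∈ J) := by
  classical
  have hdC : ∀ a : ZMod 2, d (C a) = 0 := by
    intro a
    have h : (C a : P) = algebraMap (ZMod 2) P a := by rw [algebraMap_eq]
    rw [h]
    exact d.map_algebraMap a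
  -- d ∘ d kills all variables
  have hXX : ∀ i : ℕ ⊕ Fin 3, d (d (X i)) = 0 := by
    rintro ((_ | _ | n) | k)
    · show d (d (g 0)) = 0
      rw [hg1, Derivation.leibniz, smul_eq_mul, smul_eq_mul, hρ, hv₁]
      simp
    · show d (d (g 1)) = 0
      rw [hg2, Derivation.leibniz, smul_eq_mul, smul_eq_mul, hx₁, hv₁]
      simp
    · show d (d (g (n + 2))) = 0
      rw [hg n]; simp
    · fin_cases k
      · show d (d ρ) = 0
        rw [hρ]; simp
      · show d (d x₁) = 0
        rw [hx₁]; simp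
      · show d (d v₁) = 0
        rw [hv₁]; simp
  have part1 : ∀ p : P, d (d p) = 0 := by
    intro p
    induction p using MvPolynomial.induction_on with
    | C a => rw [hdC]; simp
    | add p q hp hq => rw [map_add, map_add, hp, hq, add_zero]
    | mul_X p i hp =>
      rw [Derivation.leibniz, smul_eq_mul, smul_eq_mul, map_add, Derivation.leibniz,
        Derivation.leibniz, smul_eq_mul, smul_eq_mul, smul_eq_mul, smul_eq_mul, hXX i, hp]
      linear_combination (d (X i) * d p) * twoP
  have part2 : ∀ q : Q, d (ψ q) = 0 := by
    have hψX : ∀ j : ℕ ⊕ Fin 4, d (ψ (X j)) = 0 := by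
      rintro ((_ | _ | n) | k)
      · rw [psi_l0, pow_two, Derivation.leibniz, smul_eq_mul]
        linear_combination (g 0 * d (g 0)) * twoP
      · rw [psi_l1, pow_two, Derivation.leibniz, smul_eq_mul]
        linear_combination (g 1 * d (g 1)) * twoP
      · rw [psi_ln n]; exact hg n
      · fin_cases k
        · show d (ψ (X (Sum.inr 0))) = 0
          rw [show ψ (X (Sum.inr 0)) = ρ from psi_r0]; exact hρ
        · show d (ψ (X (Sum.inr 1))) = 0
          rw [show ψ (X (Sum.inr 1)) = x₁ from psi_r1]; exact hx₁
        · show d (ψ (X (Sum.inr 2))) = 0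
          rw [show ψ (X (Sum.inr 2)) = x₁ * g 0 + ρ * g 1 from psi_r2]
          rw [map_add, Derivation.leibniz, Derivation.leibniz, hg1, hg2, hρ, hx₁]
          simp only [smul_eq_mul]
          linear_combination (x₁ * ρ * v₁) * twoP
        · show d (ψ (X (Sum.inr 3))) = 0
          rw [show ψ (X (Sum.inr 3)) = v₁ from psi_r3]; exact hv₁
    intro q
    induction q using MvPolynomial.induction_on with
    | C a =>
      have h : ψ (C a) = C a := by simp [ψ]
      rw [h]; exact hdC a
    | add q r hq hr => rw [map_add, map_add, hq, hr, add_zero]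
    | mul_X q j hq =>
      rw [map_mul, Derivation.leibniz, smul_eq_mul, smul_eq_mul, hψX j, hq]
      simp
  -- the explicit formula for `d`
  have hD : ∀ p : P,
      d p = ρ * v₁ * (pderiv (Sum.inl 0)) p + x₁ * v₁ * (pderiv (Sum.inl 1)) p := by
    have hd : d = (ρ * v₁) • pderiv (Sum.inl 0) + (x₁ * v₁) • pderiv (Sum.inl 1) := by
      apply derivation_ext
      rintro ((_ | _ | n) | k)
      · show d (g 0) = _
        rw [hg1, Derivation.add_apply, Derivation.smul_apply, Derivation.smul_apply,
          pderiv_X_self, pderiv_X_of_ne (by simp), smul_eq_mul, smul_eq_mul, mul_one,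
          mul_zero, add_zero]
      · show d (g 1) = _
        rw [hg2, Derivation.add_apply, Derivation.smul_apply, Derivation.smul_apply,
          pderiv_X_self, pderiv_X_of_ne (by simp), smul_eq_mul, smul_eq_mul, mul_one,
          mul_zero, zero_add]
      · show d (g (n + 2)) = _
        rw [hg n, Derivation.add_apply, Derivation.smul_apply, Derivation.smul_apply,
          pderiv_X_of_ne (by simp), pderiv_X_of_ne (by simp), smul_zero, smul_zero, add_zero]
      · fin_cases k
        · show d ρ = _
          rw [hρ, Derivation.add_apply, Derivation.smul_apply, Derivation.smul_apply,
            pderiv_X_of_ne (by simp), pderiv_X_of_ne (by simp), smul_zero, smul_zero, add_zero]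
        · show d x₁ = _
          rw [hx₁, Derivation.add_apply, Derivation.smul_apply, Derivation.smul_apply,
            pderiv_X_of_ne (by simp), pderiv_X_of_ne (by simp), smul_zero, smul_zero, add_zero]
        · show d v₁ = _
          rw [hv₁, Derivation.add_apply, Derivation.smul_apply, Derivation.smul_apply,
            pderiv_X_of_ne (by simp), pderiv_X_of_ne (by simp), smul_zero, smul_zero, add_zero]
    intro p
    rw [hd, Derivation.add_apply, Derivation.smul_apply, Derivation.smul_apply,
      smul_eq_mul, smul_eq_mul]
  have hdT : ∀ p : P, d p = v₁ * (ρ * T 1 0 p + x₁ * T 0 1 p)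
      + g 0 * (x₁ * (v₁ * T 1 1 p)) + g 1 * (ρ * (v₁ * T 1 1 p)) :=
    fun p => (hD p).trans (Dformula p)
  -- J consists of boundaries
  have hJd : ∀ q ∈ J, ∃ r : P, ψ q = d r := by
    intro q hq
    refine Submodule.span_induction (p := fun x _ => ∃ r : P, ψ x = d r) ?_ ?_ ?_ ?_ hq
    · rintro x hx
      simp only [Set.mem_insert_iff, Set.mem_singleton_iff] at hx
      rcases hx with rfl | rfl | rfl | rfl
      · exact ⟨g 0, by rw [map_mul, psi_r0, psi_r3, ← hg1]⟩
      · exact ⟨g 1, by rw [map_mul, psi_r1, psi_r3, ← hg2]⟩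
      · refine ⟨g 0 * g 1, ?_⟩
        rw [map_mul, psi_r2, psi_r3, Derivation.leibniz, smul_eq_mul, smul_eq_mul, hg1, hg2]
        ring
      · refine ⟨0, ?_⟩
        rw [map_zero, map_add, map_add, map_mul, map_mul, map_pow, map_pow, map_pow,
          psi_r2, psi_r0, psi_r1, show ψ b₂' = g 1 ^ 2 from psi_l1,
          show ψ b₁' = g 0 ^ 2 from psi_l0]
        linear_combination (x₁ * g 0 * ρ * g 1 + ρ ^ 2 * g 1 ^ 2 + x₁ ^ 2 * g 0 ^ 2) * twoP
    · exact ⟨0, by simp⟩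
    · rintro x y hx' hy' ⟨rx, hrx⟩ ⟨ry, hry⟩
      exact ⟨rx + ry, by rw [map_add, map_add, hrx, hry]⟩
    · rintro z x hx' ⟨r, hr⟩
      refine ⟨ψ z * r, ?_⟩
      rw [smul_eq_mul, map_mul, hr, Derivation.leibniz, smul_eq_mul, smul_eq_mul,
        part2 z, mul_zero, add_zero]
  -- kernel of ψ is contained in J
  have hker : ∀ w : Q, ψ w = 0 → w ∈ J := by
    intro w hw
    obtain ⟨p₀, p₁, hJw⟩ := dec w
    obtain ⟨r', hr'⟩ := hJd _ hJw
    have hEu₀ : Ev (ψ (κ p₀)) := Ev_psi (Fr_kappa p₀)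
    have hEu₁ : Ev (ψ (κ p₁)) := Ev_psi (Fr_kappa p₁)
    have hEa : Ev (T 1 0 r') := Ev_T 1 0 (by norm_num) (by norm_num) r'
    have hEb : Ev (T 0 1 r') := Ev_T 0 1 (by norm_num) (by norm_num) r'
    have hEe : Ev (T 1 1 r') := Ev_T 1 1 (by norm_num) (by norm_num) r'
    have hw2 : ψ (κ p₀) + ψ (κ p₁) * (x₁ * g 0 + ρ * g 1) + d r' = 0 := by
      have h : ψ w = ψ (w - (κ p₀ + κ p₁ * x₂')) + (ψ (κ p₀) + ψ (κ p₁) * ψ x₂') := by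
        rw [map_sub, map_add, map_mul]; ring
      rw [hw, hr', psi_r2] at h
      linear_combination -h
    rw [hdT r'] at hw2
    have key : (ψ (κ p₀) + v₁ * (ρ * T 1 0 r' + x₁ * T 0 1 r'))
        + g 0 * (x₁ * (ψ (κ p₁) + v₁ * T 1 1 r'))
        + g 1 * (ρ * (ψ (κ p₁) + v₁ * T 1 1 r'))
        + g 0 * (g 1 * 0)
        = 0 + g 0 * 0 + g 1 * 0 + g 0 * (g 1 * 0) := by
      linear_combination hw2
    have hEvz : Ev (0 : P) := by intro m hm; simp at hm
    have hEin : Ev (ψ (κ p₁) + v₁ * T 1 1 r') :=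
      Ev_add hEu₁ (Ev_X_mul (k := 2) hEe)
    obtain ⟨h1, h2, _, _⟩ := sector_eq
      (Ev_add hEu₀ (Ev_X_mul (k := 2) (Ev_add (Ev_X_mul (k := 0) hEa) (Ev_X_mul (k := 1) hEb))))
      (Ev_X_mul (k := 1) hEin)
      (Ev_X_mul (k := 0) hEin)
      hEvz hEvz hEvz hEvz hEvz key
    rw [show (X (Sum.inr 2) : P) = v₁ from rfl, show (X (Sum.inr 0) : P) = ρ from rfl,
      show (X (Sum.inr 1) : P) = x₁ from rfl] at h1
    rw [show (X (Sum.inr 1) : P) = x₁ from rfl] at h2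
    -- h2 : x₁ * (ψ (κ p₁) + v₁ * T 1 1 r') = 0
    have hu1 : ψ (κ p₁) = v₁ * T 1 1 r' := by
      have hz : ψ (κ p₁) + v₁ * T 1 1 r' = 0 :=
        (mul_eq_zero.1 h2).resolve_left (X_ne_zero _)
      linear_combination hz - (v₁ * T 1 1 r') * twoP
    have hu0 : ψ (κ p₀) = v₁ * (ρ * T 1 0 r' + x₁ * T 0 1 r') := by
      linear_combination h1 - (v₁ * (ρ * T 1 0 r' + x₁ * T 0 1 r')) * twoP
    have hκ0 : κ p₀ = ρ' * (v₁' * τ (T 1 0 r')) + x₁' * (v₁' * τ (T 0 1 r')) := by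
      have h := tau_psi (Fr_kappa p₀)
      rw [hu0] at h
      rw [← h, tau_v1_mul, map_add, tau_rho_mul, tau_x1_mul]
      ring
    have hκ1 : κ p₁ = v₁' * τ (T 1 1 r') := by
      have h := tau_psi (Fr_kappa p₁)
      rw [hu1] at h
      rw [← h, tau_v1_mul]
    have hwsum : w = (w - (κ p₀ + κ p₁ * x₂'))
        + ((ρ' * (v₁' * τ (T 1 0 r')) + x₁' * (v₁' * τ (T 0 1 r')))
          + v₁' * τ (T 1 1 r') * x₂') := by
      rw [← hκ0, ← hκ1]; ring
    rw [hwsum]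
    refine J.add_mem hJw (J.add_mem (J.add_mem ?_ ?_) ?_)
    · have h : ρ' * (v₁' * τ (T 1 0 r')) = τ (T 1 0 r') * (ρ' * v₁') := by ring
      rw [h]; exact Ideal.mul_mem_left _ _ gen1_mem
    · have h : x₁' * (v₁' * τ (T 0 1 r')) = τ (T 0 1 r') * (x₁' * v₁') := by ring
      rw [h]; exact Ideal.mul_mem_left _ _ gen2_mem
    · have h : v₁' * τ (T 1 1 r') * x₂' = τ (T 1 1 r') * (x₂' * v₁') := by ring
      rw [h]; exact Ideal.mul_mem_left _ _ gen3_mem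
  -- Part 3: every cycle is in the image of ψ (modulo boundaries)
  have part3 : ∀ p : P, d p = 0 → ∃ (q : Q) (r : P), p = ψ q + d r := by
    intro p hp
    have hEA : Ev (T 0 0 p) := Ev_T 0 0 (by norm_num) (by norm_num) p
    have hEa : Ev (T 1 0 p) := Ev_T 1 0 (by norm_num) (by norm_num) p
    have hEb : Ev (T 0 1 p) := Ev_T 0 1 (by norm_num) (by norm_num) p
    have hEe : Ev (T 1 1 p) := Ev_T 1 1 (by norm_num) (by norm_num) p
    have hEvz : Ev (0 : P) := by intro m hm; simp at hm
    have hz : (v₁ * (ρ * T 1 0 p + x₁ * T 0 1 p)) + g 0 * (x₁ * (v₁ * T 1 1 p))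
        + g 1 * (ρ * (v₁ * T 1 1 p)) + g 0 * (g 1 * 0)
        = 0 + g 0 * 0 + g 1 * 0 + g 0 * (g 1 * 0) := by
      linear_combination hp - hdT p
    obtain ⟨h1, h2, _, _⟩ := sector_eq
      (Ev_X_mul (k := 2) (Ev_add (Ev_X_mul (k := 0) hEa) (Ev_X_mul (k := 1) hEb)))
      (Ev_X_mul (k := 1) (Ev_X_mul (k := 2) hEe))
      (Ev_X_mul (k := 0) (Ev_X_mul (k := 2) hEe))
      hEvz hEvz hEvz hEvz hEvz hz
    rw [show (X (Sum.inr 2) : P) = v₁ from rfl, show (X (Sum.inr 0) : P) = ρ from rfl,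
      show (X (Sum.inr 1) : P) = x₁ from rfl] at h1
    rw [show (X (Sum.inr 1) : P) = x₁ from rfl, show (X (Sum.inr 2) : P) = v₁ from rfl] at h2
    -- h2 : x₁ * (v₁ * T 1 1 p) = 0
    have he : T 1 1 p = 0 := by
      have h := (mul_eq_zero.1 h2).resolve_left (X_ne_zero _)
      exact (mul_eq_zero.1 h).resolve_left (X_ne_zero _)
    have hin : ρ * T 1 0 p + x₁ * T 0 1 p = 0 :=
      (mul_eq_zero.1 h1).resolve_left (X_ne_zero _)
    have hdvd : ρ * T 1 0 p = x₁ * T 0 1 p := by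
      linear_combination hin - (x₁ * T 0 1 p) * twoP
    have hsupp : ∀ m ∈ (T 1 0 p).support, m (Sum.inr 1) ≠ 0 := by
      intro m hm h0
      have hc : coeff (Finsupp.single (Sum.inr 0) 1 + m) (ρ * T 1 0 p)
          = coeff m (T 1 0 p) := by
        rw [ρ]; exact coeff_X_mul m (Sum.inr 0) (T 1 0 p)
      rw [hdvd] at hc
      have hz2 : coeff (Finsupp.single (Sum.inr 0) 1 + m) (x₁ * T 0 1 p) = 0 := by
        rw [← notMem_support_iff] at *
        intro hmem
        rw [x₁, support_X_mul] at hmem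
        obtain ⟨n, hn, heq⟩ := Finset.mem_map.1 hmem
        have hcoord := congrArg (fun f => f (Sum.inr 1)) heq
        simp [addLeftEmbedding_apply, Finsupp.single_apply] at hcoord
        omega
      rw [hz2] at hc
      exact (Finsupp.mem_support_iff.1 hm) hc.symm
    set t := ∑ m ∈ (T 1 0 p).support,
      monomial (m - Finsupp.single (Sum.inr 1) 1) (coeff m (T 1 0 p)) with ht
    have hat : T 1 0 p = x₁ * t := by
      rw [ht, Finset.mul_sum]
      conv_lhs => rw [as_sum (T 1 0 p)]
      apply Finset.sum_congr rfl
      intro m hm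
      rw [x₁, X_mul_monomial3]
      have hE : Finsupp.single (Sum.inr 1) 1 + (m - Finsupp.single (Sum.inr 1) 1) = m := by
        have := hsupp m hm
        apply ext3 <;> simp [Finsupp.single_apply] <;> omega
      rw [hE]
    have hEvt : Ev t := by
      rw [ht]
      apply Ev_sum
      intro m hm
      obtain ⟨e0, e1⟩ := hEa m hm
      apply Ev_monomial <;> simp [Finsupp.single_apply] <;> omega
    have hbt : T 0 1 p = ρ * t := by
      have hx : x₁ * T 0 1 p = x₁ * (ρ * t) := by
        rw [← hdvd, hat]; ring
      exact mul_left_cancel₀ (X_ne_zero _) hx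
    refine ⟨τ (T 0 0 p) + τ t * x₂', 0, ?_⟩
    rw [map_zero, add_zero, map_add, map_mul, psi_tau hEA, psi_tau hEvt, psi_r2]
    conv_lhs => rw [decomp p]
    rw [he, hat, hbt]
    ring
  -- Part 4
  have part4 : ∀ q : Q, (∃ r : P, ψ q = d r) ↔ q ∈ J := by
    intro q
    constructor
    · rintro ⟨r, hr⟩
      set q' := τ (T 1 0 r) * (ρ' * v₁') + τ (T 0 1 r) * (x₁' * v₁')
        + τ (T 1 1 r) * (x₂' * v₁') with hq'def
      have hq'J : q' ∈ J :=
        J.add_mem (J.add_mem (Ideal.mul_mem_left _ _ gen1_mem)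
          (Ideal.mul_mem_left _ _ gen2_mem)) (Ideal.mul_mem_left _ _ gen3_mem)
      have hψq' : ψ q' = d r := by
        rw [hq'def, map_add, map_add, map_mul, map_mul, map_mul, map_mul, map_mul, map_mul,
          psi_r0, psi_r1, psi_r2, psi_r3,
          psi_tau (Ev_T 1 0 (by norm_num) (by norm_num) r),
          psi_tau (Ev_T 0 1 (by norm_num) (by norm_num) r),
          psi_tau (Ev_T 1 1 (by norm_num) (by norm_num) r), hdT r]
        ring
      have hker0 : ψ (q - q') = 0 := by rw [map_sub, hr, hψq', sub_self]
      have hmem := hker _ hker0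
      have hsum : q = (q - q') + q' := by ring
      rw [hsum]
      exact J.add_mem hmem hq'J
    · exact fun h => hJd q h
  exact ⟨part1, part2, part3, part4⟩

end Stmt8

end
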